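/- If 1 ≤ p < q < ∞ and the multiplication operator M_v : L^p(μ) → L^q(μ) is bounded on a non-atomic measure space, then v = 0 almost everywhere. -/

import Mathlib

open MeasureTheory Filter Set
open scoped NNReal ENNReal

/-- A measure is non-atomic on the whole space: every set of positive measure has a
measurable subset of strictly smaller positive measure. -/
def NonAtomicMeasure {X : Type*} [MeasurableSpace X] (μ : Measure X) : Prop :=
  ∀ A : Set X, MeasurableSet A → 0 < μ A →
    ∃ B ⊆ A, MeasurableSet B ∧ 0 < μ B ∧ μ B < μ A

lemma nonatomic_small_subset {X : Type*} [MeasurableSpace X] {μ : Measure X}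
    (hna : NonAtomicMeasure μ) {A : Set X} (hA : MeasurableSet A) (h0 : 0 < μ A)
    (hfin : μ A < ∞) (n : ℕ) :
    ∃ B ⊆ A, MeasurableSet B ∧ 0 < μ B ∧ μ B ≤ μ A * 2⁻¹ ^ n := by
  induction n with
  | zero => exact ⟨A, subset_rfl, hA, h0, by simp⟩
  | succ n ih =>
    obtain ⟨B, hBA, hBm, hB0, hBle⟩ := ih
    have hBfin : μ B < ∞ := hBle.trans_lt (by
      exact lt_of_le_of_lt (mul_le_mul_right (pow_le_one' (by norm_num) n) _) (by simpa using hfin))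
    obtain ⟨B', hB'B, hB'm, hB'0, hB'lt⟩ := hna B hBm hB0
    have key : μ B * 2⁻¹ ^ (1:ℕ) = μ B / 2 := by
      rw [pow_one, ENNReal.div_eq_inv_mul, mul_comm]
    by_cases hc : μ B' ≤ μ B / 2
    · refine ⟨B', hB'B.trans hBA, hB'm, hB'0, ?_⟩
      calc μ B' ≤ μ B / 2 := hc
        _ ≤ (μ A * 2⁻¹ ^ n) / 2 := by gcongr
        _ = μ A * 2⁻¹ ^ (n+1) := by
            rw [pow_succ, ENNReal.div_eq_inv_mul]; ring
    · push_neg at hc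
      refine ⟨B \ B', diff_subset.trans hBA, hBm.diff hB'm, ?_, ?_⟩
      · have := measure_diff hB'B hB'm.nullMeasurableSet (hB'lt.trans hBfin).ne
        rw [this]
        exact tsub_pos_of_lt hB'lt
      · have hd : μ (B \ B') = μ B - μ B' :=
          measure_diff hB'B hB'm.nullMeasurableSet (hB'lt.trans hBfin).ne
        have : μ B - μ B' ≤ μ B / 2 := by
          rw [tsub_le_iff_right]
          calc μ B = μ B / 2 + μ B / 2 := (ENNReal.add_halves _).symm
            _ ≤ μ B / 2 + μ B' := by gcongr
        calc μ (B \ B') ≤ μ B / 2 := hd ▸ this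
          _ ≤ (μ A * 2⁻¹ ^ n) / 2 := by gcongr
          _ = μ A * 2⁻¹ ^ (n+1) := by
              rw [pow_succ, ENNReal.div_eq_inv_mul]; ring

theorem mult_bounded_increasing_exponent_nonatomic
    {X : Type*} {mX : MeasurableSpace X} (μ : Measure X) [SigmaFinite μ]
    (hna : NonAtomicMeasure μ)
    (p q : ℝ) (hp : 1 ≤ p) (hpq : p < q)
    (v : X → ℝ) (hv : Measurable v)
    (C : ℝ≥0)
    (hbdd : ∀ f : X → ℝ, MemLp f (ENNReal.ofReal p) μ →
      eLpNorm (fun x => v x * f x) (ENNReal.ofReal q) μ ≤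
        C * eLpNorm f (ENNReal.ofReal p) μ) :
    v =ᵐ[μ] 0 := by
  by_contra h
  -- find set where |v| is bounded below
  have hS : μ {x | v x ≠ 0} ≠ 0 := by
    rw [EventuallyEq, ae_iff] at h
    simpa using h
  have hunion : {x | v x ≠ 0} ⊆ ⋃ n : ℕ, {x | ((n:ℝ)+1)⁻¹ < |v x|} := by
    intro x hx
    obtain ⟨n, hn⟩ := exists_nat_one_div_lt (abs_pos.mpr hx)
    exact mem_iUnion.mpr ⟨n, by rwa [one_div] at hn⟩
  have hex : ∃ n : ℕ, μ {x | ((n:ℝ)+1)⁻¹ < |v x|} ≠ 0 := by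
    by_contra hall
    push_neg at hall
    exact hS (measure_mono_null hunion (by rwa [measure_iUnion_null_iff]))
  obtain ⟨n₀, hn₀⟩ := hex
  set ε : ℝ := ((n₀:ℝ)+1)⁻¹ with hε
  have hε0 : 0 < ε := by positivity
  have hA₀m : MeasurableSet {x | ε < |v x|} :=
    measurableSet_lt measurable_const hv.abs
  obtain ⟨A, hAm, hAsub, hA0, hAfin⟩ :=
    MeasureTheory.Measure.exists_subset_measure_lt_top hA₀m (pos_iff_ne_zero.mpr hn₀)
  -- exponents
  have hp0 : (0:ℝ) < p := lt_of_lt_of_le one_pos hp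
  have hq0 : (0:ℝ) < q := hp0.trans hpq
  have hpe : (ENNReal.ofReal p) ≠ 0 := by
    simp [ENNReal.ofReal_eq_zero, not_le, hp0]
  have hqe : (ENNReal.ofReal q) ≠ 0 := by
    simp [ENNReal.ofReal_eq_zero, not_le, hq0]
  have hpt : (ENNReal.ofReal p).toReal = p := ENNReal.toReal_ofReal hp0.le
  have hqt : (ENNReal.ofReal q).toReal = q := ENNReal.toReal_ofReal hq0.le
  set r : ℝ := 1/p - 1/q with hr
  have hr0 : 0 < r := by
    rw [hr, sub_pos]
    exact one_div_lt_one_div_of_lt hp0 hpq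
  -- key estimate for subsets of A
  have key : ∀ B ⊆ A, MeasurableSet B → 0 < μ B →
      (‖ε‖₊ : ℝ≥0∞) ≤ C * μ B ^ r := by
    intro B hBA hBm hB0
    have hBfin : μ B < ∞ := (measure_mono hBA).trans_lt hAfin
    set f : X → ℝ := B.indicator (fun _ => (1:ℝ)) with hf
    have hmem : MemLp f (ENNReal.ofReal p) μ :=
      memLp_indicator_const _ hBm 1 (Or.inr hBfin.ne)
    have h1 := hbdd f hmem
    have hfp : eLpNorm f (ENNReal.ofReal p) μ = μ B ^ (1/p) := by
      rw [hf, eLpNorm_indicator_const hBm hpe ENNReal.ofReal_ne_top, hpt]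
      simp
    have hlow : eLpNorm (B.indicator (fun _ => ε)) (ENNReal.ofReal q) μ ≤
        eLpNorm (fun x => v x * f x) (ENNReal.ofReal q) μ := by
      apply eLpNorm_mono
      intro x
      by_cases hx : x ∈ B
      · simp only [hf, indicator_of_mem hx, mul_one]
        have : ε < |v x| := hAsub (hBA hx)
        simpa [abs_of_pos hε0] using this.le
      · simp [hf, indicator_of_notMem hx]
    have hlq : eLpNorm (B.indicator (fun _ => ε)) (ENNReal.ofReal q) μ =
        (‖ε‖₊ : ℝ≥0∞) * μ B ^ (1/q) := by
      rw [eLpNorm_indicator_const hBm hqe ENNReal.ofReal_ne_top, hqt]; rfl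
    have h2 : (‖ε‖₊ : ℝ≥0∞) * μ B ^ (1/q) ≤ C * μ B ^ (1/p) := by
      rw [← hlq, ← hfp]
      exact hlow.trans h1
    have hsplit : μ B ^ (1/p) = μ B ^ r * μ B ^ (1/q) := by
      rw [← ENNReal.rpow_add _ _ hB0.ne' hBfin.ne]
      congr 1
      rw [hr]; ring
    rw [hsplit, ← mul_assoc] at h2
    have hBq0 : μ B ^ (1/q) ≠ 0 := by
      simp [ENNReal.rpow_eq_zero_iff, hB0.ne', hBfin.ne, hq0, one_div, hq0.ne']
    have hBqt : μ B ^ (1/q) ≠ ∞ := by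
      simp [ENNReal.rpow_eq_top_iff, hB0.ne', hBfin.ne]
    exact (ENNReal.mul_le_mul_iff_left hBq0 hBqt).mp h2
  -- C ≠ 0
  have hεne : (‖ε‖₊ : ℝ≥0∞) ≠ 0 := by
    simp [nnnorm_eq_zero, hε0.ne']
  have hC0 : (C : ℝ≥0∞) ≠ 0 := by
    intro hC
    obtain ⟨B, hBA, hBm, hB0, _⟩ := nonatomic_small_subset hna hAm hA0 hAfin 0
    have := key B hBA hBm hB0
    rw [hC, zero_mul, le_zero_iff] at this
    exact hεne this
  -- choose small B to contradict
  set t₀ : ℝ≥0∞ := ((‖ε‖₊ : ℝ≥0∞) / C) ^ (1/r) with ht₀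
  have hεC0 : (‖ε‖₊ : ℝ≥0∞) / C ≠ 0 := by
    simp [ENNReal.div_eq_zero_iff, hεne, ENNReal.coe_ne_top]
  have hεCt : (‖ε‖₊ : ℝ≥0∞) / C ≠ ∞ := by
    simp [ENNReal.div_eq_top, hC0, ENNReal.coe_ne_top]
  have ht₀0 : t₀ ≠ 0 := by
    rw [ht₀]
    simp [ENNReal.rpow_eq_zero_iff, hεC0, hεCt]
  obtain ⟨n, hn⟩ := ENNReal.exists_inv_two_pow_lt
    (a := t₀ / μ A) (by simp [ENNReal.div_eq_zero_iff, ht₀0, hAfin.ne])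
  obtain ⟨B, hBA, hBm, hB0, hBle⟩ := nonatomic_small_subset hna hAm hA0 hAfin n
  have hBlt : μ B < t₀ := by
    calc μ B ≤ μ A * 2⁻¹ ^ n := hBle
      _ < μ A * (t₀ / μ A) := by
          exact (ENNReal.mul_lt_mul_iff_right hA0.ne' hAfin.ne).mpr hn
      _ = t₀ := ENNReal.mul_div_cancel hA0.ne' hAfin.ne
  have hfinal := key B hBA hBm hB0
  have hBr : μ B ^ r < (‖ε‖₊ : ℝ≥0∞) / C := by
    have := ENNReal.rpow_lt_rpow hBlt hr0
    rwa [ht₀, ← ENNReal.rpow_mul, one_div, inv_mul_cancel₀ hr0.ne', ENNReal.rpow_one] at this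
  have : C * μ B ^ r < (‖ε‖₊ : ℝ≥0∞) := by
    calc C * μ B ^ r < C * ((‖ε‖₊ : ℝ≥0∞) / C) :=
          (ENNReal.mul_lt_mul_iff_right hC0 ENNReal.coe_ne_top).mpr hBr
      _ = (‖ε‖₊ : ℝ≥0∞) := ENNReal.mul_div_cancel hC0 ENNReal.coe_ne_top
  exact absurd hfinal (not_le.mpr this)
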